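/- Let C ⊆ ℝ^m be a convex cone with nonempty interior, let v ∈ C, and let g be a real-valued function defined on a neighborhood of v that is differentiable at v, satisfies g(v) = 0, satisfies g ≥ 0 on C in a neighborhood of v, and has nonzero differential Dg(v) ≠ 0. Then Dg(v)(w) > 0 for every w in the interior of C. -/

import Mathlib

/-- **Strict positivity of a nonzero differential on the interior of a cone.**
Let `C ⊆ ℝ^m` be a convex cone with nonempty interior, `v ∈ C`, and `g` differentiable
at `v` with `g v = 0`, `g ≥ 0` on `C` near `v`, and nonzero differential `Dg ≠ 0`.
Then `Dg w > 0` for every `w` in the interior of `C`. -/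
theorem differential_pos_on_interior
    {m : ℕ} (C : Set (EuclideanSpace ℝ (Fin m)))
    (hC_ne : C.Nonempty)
    (hC_add : ∀ v ∈ C, ∀ w ∈ C, v + w ∈ C)
    (hC_smul : ∀ c : ℝ, 0 < c → ∀ v ∈ C, c • v ∈ C)
    (hC_int : (interior C).Nonempty)
    (v : EuclideanSpace ℝ (Fin m)) (hv : v ∈ C)
    (g : EuclideanSpace ℝ (Fin m) → ℝ)
    (Dg : EuclideanSpace ℝ (Fin m) →L[ℝ] ℝ)
    (hg_diff : HasFDerivAt g Dg v)
    (hg_v : g v = 0)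
    (hg_nonneg : ∃ U ∈ nhds v, ∀ y ∈ U ∩ C, 0 ≤ g y)
    (hDg : Dg ≠ 0) :
    ∀ w ∈ interior C, 0 < Dg w := by
  obtain ⟨U, hU, hgU⟩ := hg_nonneg
  -- Step 1: Dg is nonnegative on C.
  have key : ∀ u ∈ C, 0 ≤ Dg u := by
    intro u hu
    have hinner : HasDerivAt (fun t : ℝ => v + t • u) u 0 := by
      simpa using ((hasDerivAt_id (0 : ℝ)).smul_const u).const_add v
    have hg' : HasFDerivAt g Dg (v + (0:ℝ) • u) := by simpa using hg_diff
    have hline : HasDerivAt (fun t : ℝ => g (v + t • u)) (Dg u) 0 := by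
      have h := hg'.comp_hasDerivAt (x := (0 : ℝ)) hinner
      exact h
    have hslope := hasDerivAt_iff_tendsto_slope.mp hline
    have hslope' : Filter.Tendsto (slope (fun t : ℝ => g (v + t • u)) 0)
        (nhdsWithin 0 (Set.Ioi 0)) (nhds (Dg u)) :=
      hslope.mono_left (nhdsWithin_mono _ (by intro t ht; exact ne_of_gt ht))
    refine ge_of_tendsto hslope' ?_
    have hcont : Filter.Tendsto (fun t : ℝ => v + t • u) (nhds 0) (nhds v) := by
      simpa using hinner.continuousAt.tendsto
    have hUev : ∀ᶠ t : ℝ in nhdsWithin 0 (Set.Ioi 0), v + t • u ∈ U :=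
      Filter.Eventually.filter_mono nhdsWithin_le_nhds (hcont.eventually_mem hU)
    filter_upwards [hUev, self_mem_nhdsWithin] with t htU (ht : (0:ℝ) < t)
    have hmem : v + t • u ∈ C := hC_add v hv _ (hC_smul t ht u hu)
    have hge : 0 ≤ g (v + t • u) := hgU _ ⟨htU, hmem⟩
    have : slope (fun t : ℝ => g (v + t • u)) 0 t = g (v + t • u) / t := by
      simp [slope_def_field, hg_v]
    rw [this]
    positivity
  -- Step 2: strict positivity on the interior.
  intro w hw
  obtain ⟨ε, hε, hball⟩ := Metric.isOpen_iff.mp isOpen_interior w hw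
  -- pick a direction with negative Dg
  obtain ⟨e, he⟩ : ∃ e, Dg e ≠ 0 := by
    by_contra h
    push_neg at h
    exact hDg (ContinuousLinearMap.ext fun x => by simp [h x])
  obtain ⟨u, hu_ne, hu_neg⟩ : ∃ u : EuclideanSpace ℝ (Fin m), u ≠ 0 ∧ Dg u < 0 := by
    rcases lt_or_gt_of_ne he with h | h
    · exact ⟨e, fun h0 => by simp [h0] at he, h⟩
    · exact ⟨-e, fun h0 => by simp [neg_eq_zero] at h0; simp [h0] at he, by simpa using neg_neg_iff_pos.mpr h⟩
  set δ : ℝ := ε / (2 * ‖u‖) with hδ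
  have hu_norm : (0:ℝ) < ‖u‖ := norm_pos_iff.mpr hu_ne
  have hδpos : 0 < δ := by positivity
  have hmem : w + δ • u ∈ C := by
    apply interior_subset
    apply hball
    rw [Metric.mem_ball]
    have : dist (w + δ • u) w = δ * ‖u‖ := by
      rw [dist_eq_norm]
      simp [norm_smul, abs_of_pos hδpos]
    have h2 : δ * ‖u‖ = ε / 2 := by
      rw [hδ]; field_simp
    rw [this, h2]
    linarith
  have h1 := key _ hmem
  rw [map_add, map_smul] at h1
  have : 0 < -(δ * Dg u) := by
    simp only [neg_pos]
    exact mul_neg_of_pos_of_neg hδpos hu_neg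
  simp only [smul_eq_mul] at h1
  linarith
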